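/- Define the linear functional h_ℝ on the twisted plane ℝ_q^{N+1} by h_ℝ = 0 on odd-degree monomials and h_ℝ(x^{i_1}⋯x^{i_{2n}}) = λ_n Δ^n(x^{i_1}⋯x^{i_{2n}}) where λ_n = 1/(2^n n! (N+1)(N+3)⋯(N+2n−1)) (and Δ^n of a degree-2n monomial is a scalar). Then h_ℝ vanishes on the ideal (c−1)·ℝ_q^{N+1}, hence descends to a well-defined functional h on the twisted sphere 𝕊_q^N = ℝ_q^{N+1}/(c−1). -/

import Mathlib

/-- The defining relations of the twisted quantum Euclidean plane:
`x^a x^b = q(a,b) x^b x^a`. -/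
def twistRel {N : ℕ} (q : Fin N → Fin N → ℂ) :
    FreeAlgebra ℂ (Fin N) → FreeAlgebra ℂ (Fin N) → Prop :=
  fun u v => ∃ a b : Fin N,
    u = FreeAlgebra.ι ℂ a * FreeAlgebra.ι ℂ b ∧
    v = q a b • (FreeAlgebra.ι ℂ b * FreeAlgebra.ι ℂ a)

/-- The twisted quantum Euclidean plane `ℝ_q^N`. -/
abbrev TwistedPlane {N : ℕ} (q : Fin N → Fin N → ℂ) := RingQuot (twistRel q)

/-- The coordinate generators of the twisted plane. -/
def X {N : ℕ} (q : Fin N → Fin N → ℂ) (a : Fin N) : TwistedPlane q :=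
  RingQuot.mkAlgHom ℂ (twistRel q) (FreeAlgebra.ι ℂ a)

/-- The central element `c = Σ_a x^a x^{a'}` (with `g_{ab} = δ_{a,b'}`,
primed index `a' = Fin.rev a`). -/
def cElem {N : ℕ} (q : Fin N → Fin N → ℂ) : TwistedPlane q :=
  ∑ a, X q a * X q (Fin.rev a)

section Aux
variable {N : ℕ} (q : Fin N → Fin N → ℂ)

lemma Xrel (a b : Fin N) : X q a * X q b = q a b • (X q b * X q a) := by
  have hr : twistRel q (FreeAlgebra.ι ℂ a * FreeAlgebra.ι ℂ b)
      (q a b • (FreeAlgebra.ι ℂ b * FreeAlgebra.ι ℂ a)) := ⟨a, b, rfl, rfl⟩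
  have h := RingQuot.mkAlgHom_rel ℂ hr
  simpa [X, map_mul, map_smul] using h

def MonSet (n : ℕ) : Set (TwistedPlane q) :=
  { y | ∃ i : Fin n → Fin N, y = (List.ofFn fun k => X q (i k)).prod }

def MS (n : ℕ) : Submodule ℂ (TwistedPlane q) := Submodule.span ℂ (MonSet q n)

lemma mon_mem {n : ℕ} (i : Fin n → Fin N) :
    (List.ofFn fun k => X q (i k)).prod ∈ MS q n :=
  Submodule.subset_span ⟨i, rfl⟩

lemma mon_cons {n : ℕ} (a : Fin N) (i : Fin n → Fin N) :
    (List.ofFn fun k => X q ((Fin.cons a i : Fin (n+1) → Fin N) k)).prod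
      = X q a * (List.ofFn fun k => X q (i k)).prod := by
  rw [List.ofFn_succ]
  simp

lemma mon_succ {n : ℕ} (i : Fin (n + 1) → Fin N) :
    (List.ofFn fun k => X q (i k)).prod
      = X q (i 0) * (List.ofFn fun k => X q (i k.succ)).prod := by
  rw [List.ofFn_succ]
  simp

lemma mulX_mem {n : ℕ} (a : Fin N) {x : TwistedPlane q} (hx : x ∈ MS q n) :
    X q a * x ∈ MS q (n + 1) := by
  induction hx using Submodule.span_induction with
  | mem y hy =>
      obtain ⟨i, rfl⟩ := hy
      rw [← mon_cons]
      exact mon_mem q _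
  | zero => simp
  | add y z _ _ hy hz => rw [mul_add]; exact (MS q (n+1)).add_mem hy hz
  | smul c y _ hy => rw [mul_smul_comm]; exact (MS q (n+1)).smul_mem c hy

end Aux

section Ops
variable {N : ℕ} {q : Fin (N + 1) → Fin (N + 1) → ℂ}
variable {D : Fin (N + 1) → Module.End ℂ (TwistedPlane q)}

lemma D_ms_zero (hD1 : ∀ s, D s 1 = 0) (s : Fin (N + 1)) {x : TwistedPlane q}
    (hx : x ∈ MS q 0) : D s x = 0 := by
  induction hx using Submodule.span_induction with
  | mem y hy => obtain ⟨i, rfl⟩ := hy; simpa using hD1 s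
  | zero => simp
  | add y z _ _ hy hz => simp [map_add, hy, hz]
  | smul c y _ hy => simp [map_smul, hy]

lemma D_ms_succ (hD1 : ∀ s, D s 1 = 0)
    (hD2 : ∀ s a f, D s (X q a * f) =
      (if a = s then f else 0) + q a s • (X q a * D s f)) :
    ∀ (n : ℕ) (s : Fin (N + 1)) {x : TwistedPlane q},
      x ∈ MS q (n + 1) → D s x ∈ MS q n := by
  intro n
  induction n with
  | zero =>
      intro s x hx
      induction hx using Submodule.span_induction with
      | mem y hy =>
          obtain ⟨i, rfl⟩ := hy
          rw [mon_succ, hD2, D_ms_zero hD1 s (mon_mem q _)]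
          simp only [mul_zero, smul_zero, add_zero]
          split
          · exact mon_mem q _
          · exact (MS q 0).zero_mem
      | zero => simp
      | add y z _ _ hy hz => rw [map_add]; exact (MS q 0).add_mem hy hz
      | smul c y _ hy => rw [map_smul]; exact (MS q 0).smul_mem c hy
  | succ m ih =>
      intro s x hx
      induction hx using Submodule.span_induction with
      | mem y hy =>
          obtain ⟨i, rfl⟩ := hy
          rw [mon_succ, hD2]
          refine (MS q (m + 1)).add_mem ?_ ((MS q (m + 1)).smul_mem _
            (mulX_mem q _ (ih s (mon_mem q _))))
          split
          · exact mon_mem q _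
          · exact (MS q (m + 1)).zero_mem
      | zero => simp
      | add y z _ _ hy hz => rw [map_add]; exact (MS q (m + 1)).add_mem hy hz
      | smul c y _ hy => rw [map_smul]; exact (MS q (m + 1)).smul_mem c hy

/-- The Euler operator. -/
noncomputable def Eul (q : Fin (N + 1) → Fin (N + 1) → ℂ)
    (D : Fin (N + 1) → Module.End ℂ (TwistedPlane q)) :
    Module.End ℂ (TwistedPlane q) :=
  ∑ s, (LinearMap.mulLeft ℂ (X q s)) * D s

lemma Eul_X_mul (h2 : ∀ a b, q a b * q b a = 1)
    (hD2 : ∀ s a f, D s (X q a * f) =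
      (if a = s then f else 0) + q a s • (X q a * D s f))
    (a : Fin (N + 1)) (g : TwistedPlane q) :
    Eul q D (X q a * g) = X q a * g + X q a * Eul q D g := by
  have key : ∀ s : Fin (N + 1),
      X q s * D s (X q a * g)
        = (if a = s then X q s * g else 0) + X q a * (X q s * D s g) := by
    intro s
    rw [hD2]
    rw [mul_add, mul_smul_comm]
    congr 1
    · split <;> simp
    · -- q a s • (X s * (X a * (D s g))) = X a * (X s * D s g)
      rw [← mul_assoc, Xrel q s a, smul_mul_assoc, smul_smul, mul_comm (q a s), h2,
        one_smul, mul_assoc]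
  simp only [Eul, LinearMap.sum_apply, Module.End.mul_apply, LinearMap.mulLeft_apply]
  rw [Finset.sum_congr rfl fun s _ => key s, Finset.sum_add_distrib,
    Finset.sum_ite_eq Finset.univ a (fun s => X q s * g), ← Finset.mul_sum]
  simp

lemma Eul_homog (h2 : ∀ a b, q a b * q b a = 1) (hD1 : ∀ s, D s 1 = 0)
    (hD2 : ∀ s a f, D s (X q a * f) =
      (if a = s then f else 0) + q a s • (X q a * D s f)) :
    ∀ (n : ℕ) {x : TwistedPlane q}, x ∈ MS q n → Eul q D x = (n : ℂ) • x := by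
  intro n
  induction n with
  | zero =>
      intro x hx
      induction hx using Submodule.span_induction with
      | mem y hy =>
          obtain ⟨i, rfl⟩ := hy
          simp only [List.ofFn_zero, List.prod_nil]
          simp [Eul, hD1]
      | zero => simp
      | add y z _ _ hy hz => rw [map_add, hy, hz]; simp
      | smul c y _ hy => rw [map_smul, hy]; simp [smul_smul, mul_comm]
  | succ m ih =>
      intro x hx
      induction hx using Submodule.span_induction with
      | mem y hy =>
          obtain ⟨i, rfl⟩ := hy
          rw [mon_succ, Eul_X_mul h2 hD2, ih (mon_mem q _)]
          rw [mul_smul_comm]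
          push_cast
          module
      | zero => simp
      | add y z _ _ hy hz => rw [map_add, hy, hz]; simp
      | smul c y _ hy => rw [map_smul, hy]; simp [smul_smul, mul_comm]

end Ops

section Core
variable {N : ℕ} {q : Fin (N + 1) → Fin (N + 1) → ℂ}
variable {D : Fin (N + 1) → Module.End ℂ (TwistedPlane q)}

/-- The Laplacian. -/
noncomputable def Lap (q : Fin (N + 1) → Fin (N + 1) → ℂ)
    (D : Fin (N + 1) → Module.End ℂ (TwistedPlane q)) :
    Module.End ℂ (TwistedPlane q) :=
  ∑ j, D j * D (Fin.rev j)

lemma q_self_rev (h1 : ∀ a, q a a = 1) (h3 : ∀ a b, q a b * q a (Fin.rev b) = 1)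
    (j : Fin (N + 1)) : q j (Fin.rev j) = 1 := by
  have := h3 j j; rw [h1] at this; simpa using this

lemma q_rev_self (h1 : ∀ a, q a a = 1) (h3 : ∀ a b, q a b * q a (Fin.rev b) = 1)
    (j : Fin (N + 1)) : q (Fin.rev j) j = 1 := by
  have := q_self_rev h1 h3 (Fin.rev j); rwa [Fin.rev_rev] at this

lemma q_coeff1 (h3 : ∀ a b, q a b * q a (Fin.rev b) = 1)
    (h4 : ∀ a b, q a b = q (Fin.rev a) (Fin.rev b)) (a j : Fin (N + 1)) :
    q a (Fin.rev j) * q (Fin.rev a) (Fin.rev j) = 1 := by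
  have e : q (Fin.rev a) (Fin.rev j) = q a j := (h4 a j).symm
  rw [e, mul_comm]; exact h3 a j

lemma q_coeff2 (h3 : ∀ a b, q a b * q a (Fin.rev b) = 1)
    (h4 : ∀ a b, q a b = q (Fin.rev a) (Fin.rev b)) (a j : Fin (N + 1)) :
    q a j * q (Fin.rev a) j = 1 := by
  have e : q (Fin.rev a) j = q a (Fin.rev j) := by
    rw [h4 (Fin.rev a) j, Fin.rev_rev]
  rw [e]; exact h3 a j

lemma DXX
    (hD2 : ∀ s a f, D s (X q a * f) =
      (if a = s then f else 0) + q a s • (X q a * D s f))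
    (s a b : Fin (N + 1)) (g : TwistedPlane q) :
    D s (X q a * (X q b * g))
      = (if a = s then X q b * g else 0)
        + (if b = s then q a s • (X q a * g) else 0)
        + (q a s * q b s) • (X q a * (X q b * D s g)) := by
  rw [hD2, hD2]
  rw [mul_add, mul_smul_comm, smul_add, mul_ite, mul_zero, smul_ite, smul_zero,
    smul_smul, add_assoc]

lemma term_eq (h1 : ∀ a, q a a = 1)
    (h3 : ∀ a b, q a b * q a (Fin.rev b) = 1)
    (h4 : ∀ a b, q a b = q (Fin.rev a) (Fin.rev b))
    (hD2 : ∀ s a f, D s (X q a * f) =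
      (if a = s then f else 0) + q a s • (X q a * D s f))
    (j a : Fin (N + 1)) (f : TwistedPlane q) :
    D j (D (Fin.rev j) (X q a * (X q (Fin.rev a) * f)))
      = ((if a = j then 1 else 0) + (if a = Fin.rev j then 1 else 0) : ℂ)
          • (f + X q j * D j f + X q (Fin.rev j) * D (Fin.rev j) f)
        + X q a * (X q (Fin.rev a) * D j (D (Fin.rev j) f)) := by
  rw [DXX hD2 (Fin.rev j) a (Fin.rev a) f, q_coeff1 h3 h4, one_smul,
    map_add, map_add,
    DXX hD2 j a (Fin.rev a) (D (Fin.rev j) f), q_coeff2 h3 h4, one_smul,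
    apply_ite (D j), map_zero, apply_ite (D j), map_zero, map_smul,
    hD2 j (Fin.rev a) f, hD2 j a f]
  by_cases haj : a = j
  · subst haj
    by_cases hr : a = Fin.rev a
    · simp only [← hr, eq_self_iff_true, if_true, h1, one_smul]
      module
    · have h5 : ¬ Fin.rev a = a := fun h => hr h.symm
      simp only [eq_self_iff_true, if_true, if_neg hr, if_neg h5, h1, one_smul,
        q_self_rev h1 h3, q_rev_self h1 h3]
      module
  · by_cases haj' : a = Fin.rev j
    · subst haj'
      have h5 : Fin.rev (Fin.rev j) = j := Fin.rev_rev j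
      have h6 : ¬ Fin.rev j = j := fun h => haj h
      have h7 : ¬ j = Fin.rev j := fun h => haj h.symm
      simp only [h5, eq_self_iff_true, if_true, if_neg h6, if_neg h7, h1, one_smul,
        q_self_rev h1 h3, q_rev_self h1 h3]
      module
    · have h5 : ¬ Fin.rev a = Fin.rev j := fun h => haj (Fin.rev_injective h)
      have h6 : ¬ Fin.rev a = j := fun h => haj' (by rw [← h, Fin.rev_rev])
      simp only [if_neg haj, if_neg haj', if_neg h5, if_neg h6, map_zero]
      module

end Core

section Key
variable {N : ℕ} {q : Fin (N + 1) → Fin (N + 1) → ℂ}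
variable {D : Fin (N + 1) → Module.End ℂ (TwistedPlane q)}

lemma Eul_eq_sum (f : TwistedPlane q) :
    Eul q D f = ∑ s, X q s * D s f := by
  simp [Eul, LinearMap.sum_apply, Module.End.mul_apply]

lemma key1 (h1 : ∀ a, q a a = 1)
    (h3 : ∀ a b, q a b * q a (Fin.rev b) = 1)
    (h4 : ∀ a b, q a b = q (Fin.rev a) (Fin.rev b))
    (hD2 : ∀ s a f, D s (X q a * f) =
      (if a = s then f else 0) + q a s • (X q a * D s f))
    (f : TwistedPlane q) :
    Lap q D (cElem q * f)
      = ((2 : ℂ) * ((N : ℂ) + 1)) • f + (4 : ℂ) • Eul q D f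
        + cElem q * Lap q D f := by
  have hcf : ∀ g : TwistedPlane q,
      cElem q * g = ∑ a, X q a * (X q (Fin.rev a) * g) := by
    intro g; rw [cElem, Finset.sum_mul]; simp_rw [mul_assoc]
  rw [Lap, LinearMap.sum_apply]
  simp only [Module.End.mul_apply]
  rw [hcf]
  simp only [map_sum]
  rw [Finset.sum_congr rfl
    (fun j _ => Finset.sum_congr rfl (fun a _ => term_eq h1 h3 h4 hD2 j a f))]
  have sum_ind : ∀ j : Fin (N + 1),
      (∑ a, ((if a = j then (1 : ℂ) else 0) + (if a = Fin.rev j then 1 else 0)))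
        = 2 := by
    intro j
    rw [Finset.sum_add_distrib, Finset.sum_ite_eq' Finset.univ j fun _ => (1 : ℂ),
      Finset.sum_ite_eq' Finset.univ (Fin.rev j) fun _ => (1 : ℂ)]
    norm_num
  have inner : ∀ j : Fin (N + 1),
      (∑ a, (((if a = j then (1 : ℂ) else 0) + (if a = Fin.rev j then 1 else 0))
          • (f + X q j * D j f + X q (Fin.rev j) * D (Fin.rev j) f)
        + X q a * (X q (Fin.rev a) * D j (D (Fin.rev j) f))))
      = (2 : ℂ) • (f + X q j * D j f + X q (Fin.rev j) * D (Fin.rev j) f)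
        + cElem q * (D j (D (Fin.rev j) f)) := by
    intro j
    rw [Finset.sum_add_distrib, ← Finset.sum_smul, sum_ind j, ← hcf]
  rw [Finset.sum_congr rfl fun j _ => inner j]
  rw [Finset.sum_add_distrib, ← Finset.mul_sum]
  have hlap2 : cElem q * (∑ j, D j (D (Fin.rev j) f))
      = cElem q * (∑ j, D j * D (Fin.rev j)) f := by
    rw [LinearMap.sum_apply]
    simp only [Module.End.mul_apply]
  have hrev : (∑ j, X q (Fin.rev j) * D (Fin.rev j) f) = Eul q D f := by
    rw [Eul_eq_sum]
    exact Fintype.sum_equiv Fin.revPerm _ _ (fun j => rfl)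
  have hsum2 : (∑ j : Fin (N + 1),
        (2 : ℂ) • (f + X q j * D j f + X q (Fin.rev j) * D (Fin.rev j) f))
      = ((2 : ℂ) * ((N : ℂ) + 1)) • f + (4 : ℂ) • Eul q D f := by
    rw [← Finset.smul_sum, Finset.sum_add_distrib, Finset.sum_add_distrib,
      Finset.sum_const, ← Eul_eq_sum, hrev]
    simp only [Finset.card_univ, Fintype.card_fin]
    rw [← Nat.cast_smul_eq_nsmul ℂ]
    push_cast
    module
  rw [hsum2, hlap2]

end Key

section Fin2
variable {N : ℕ} {q : Fin (N + 1) → Fin (N + 1) → ℂ}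
variable {D : Fin (N + 1) → Module.End ℂ (TwistedPlane q)}

lemma lap_ms_zero (hD1 : ∀ s, D s 1 = 0) {x : TwistedPlane q} (hx : x ∈ MS q 0) :
    Lap q D x = 0 := by
  rw [Lap, LinearMap.sum_apply]
  refine Finset.sum_eq_zero fun j _ => ?_
  rw [Module.End.mul_apply, D_ms_zero hD1 (Fin.rev j) hx, map_zero]

lemma lap_ms (hD1 : ∀ s, D s 1 = 0)
    (hD2 : ∀ s a f, D s (X q a * f) =
      (if a = s then f else 0) + q a s • (X q a * D s f))
    (n : ℕ) {x : TwistedPlane q} (hx : x ∈ MS q (2 * n + 2)) :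
    Lap q D x ∈ MS q (2 * n) := by
  rw [Lap, LinearMap.sum_apply]
  refine Submodule.sum_mem _ fun j _ => ?_
  rw [Module.End.mul_apply]
  exact D_ms_succ hD1 hD2 (2 * n) j (D_ms_succ hD1 hD2 (2 * n + 1) (Fin.rev j) hx)

lemma key2 (h1 : ∀ a, q a a = 1)
    (h2 : ∀ a b, q a b * q b a = 1)
    (h3 : ∀ a b, q a b * q a (Fin.rev b) = 1)
    (h4 : ∀ a b, q a b = q (Fin.rev a) (Fin.rev b))
    (hD1 : ∀ s, D s 1 = 0)
    (hD2 : ∀ s a f, D s (X q a * f) =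
      (if a = s then f else 0) + q a s • (X q a * D s f)) :
    ∀ (n : ℕ) {x : TwistedPlane q}, x ∈ MS q (2 * n) →
      (Lap q D ^ (n + 1)) (cElem q * x)
        = ((2 : ℂ) * ((n : ℂ) + 1) * ((N : ℂ) + 2 * n + 1)) • ((Lap q D ^ n) x) := by
  intro n
  induction n with
  | zero =>
      intro x hx
      rw [pow_one, pow_zero, Module.End.one_apply, key1 h1 h3 h4 hD2,
        Eul_homog h2 hD1 hD2 0 hx, lap_ms_zero hD1 hx, mul_zero]
      push_cast
      module
  | succ m ih =>
      intro x hx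
      have hx' : x ∈ MS q (2 * m + 2) := by
        have : 2 * (m + 1) = 2 * m + 2 := by ring
        rwa [this] at hx
      rw [pow_succ, Module.End.mul_apply, key1 h1 h3 h4 hD2, map_add, map_add,
        map_smul, map_smul, Eul_homog h2 hD1 hD2 (2 * (m + 1)) hx,
        ih (lap_ms hD1 hD2 m hx'), map_smul]
      rw [show (Lap q D ^ m) (Lap q D x) = (Lap q D ^ (m + 1)) x from by
        rw [pow_succ, Module.End.mul_apply]]
      push_cast
      match_scalars
      ring

end Fin2

section Total
variable {N : ℕ} {q : Fin (N + 1) → Fin (N + 1) → ℂ}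
variable {D : Fin (N + 1) → Module.End ℂ (TwistedPlane q)}

lemma cElem_mul (g : TwistedPlane q) :
    cElem q * g = ∑ a, X q a * (X q (Fin.rev a) * g) := by
  rw [cElem, Finset.sum_mul]; simp_rw [mul_assoc]

lemma mon_two_cons {n : ℕ} (a b : Fin (N + 1)) (i : Fin n → Fin (N + 1)) :
    X q a * (X q b * (List.ofFn fun k => X q (i k)).prod)
      = (List.ofFn fun k =>
          X q ((Fin.cons a (Fin.cons b i) : Fin (n + 2) → Fin (N + 1)) k)).prod := by
  rw [mon_cons, mon_cons]

lemma mon_mem_spAll {n : ℕ} (i : Fin n → Fin (N + 1)) :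
    (List.ofFn fun k => X q (i k)).prod
      ∈ Submodule.span ℂ (⋃ n, MonSet q n) :=
  Submodule.subset_span (Set.mem_iUnion.mpr ⟨n, i, rfl⟩)

lemma Xmul_spAll (a : Fin (N + 1)) {y : TwistedPlane q}
    (hy : y ∈ Submodule.span ℂ (⋃ n, MonSet q n)) :
    X q a * y ∈ Submodule.span ℂ (⋃ n, MonSet q n) := by
  induction hy using Submodule.span_induction with
  | mem z hz =>
      rw [Set.mem_iUnion] at hz
      obtain ⟨n, i, rfl⟩ := hz
      rw [← mon_cons]
      exact mon_mem_spAll _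
  | zero => simp
  | add y z _ _ hy hz => rw [mul_add]; exact Submodule.add_mem _ hy hz
  | smul c y _ hy => rw [mul_smul_comm]; exact Submodule.smul_mem _ c hy

lemma monmul_spAll : ∀ (n : ℕ) (i : Fin n → Fin (N + 1)) {y : TwistedPlane q},
    y ∈ Submodule.span ℂ (⋃ n, MonSet q n) →
    (List.ofFn fun k => X q (i k)).prod * y ∈ Submodule.span ℂ (⋃ n, MonSet q n) := by
  intro n
  induction n with
  | zero => intro i y hy; simpa using hy
  | succ m ih =>
      intro i y hy
      rw [mon_succ, mul_assoc]
      exact Xmul_spAll _ (ih _ hy)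

lemma mul_spAll {x y : TwistedPlane q}
    (hx : x ∈ Submodule.span ℂ (⋃ n, MonSet q n))
    (hy : y ∈ Submodule.span ℂ (⋃ n, MonSet q n)) :
    x * y ∈ Submodule.span ℂ (⋃ n, MonSet q n) := by
  induction hx using Submodule.span_induction with
  | mem z hz =>
      rw [Set.mem_iUnion] at hz
      obtain ⟨n, i, rfl⟩ := hz
      exact monmul_spAll n i hy
  | zero => simp
  | add y' z _ _ hy' hz => rw [add_mul]; exact Submodule.add_mem _ hy' hz
  | smul c y' _ hy' => rw [smul_mul_assoc]; exact Submodule.smul_mem _ c hy'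

lemma total (f : TwistedPlane q) : f ∈ Submodule.span ℂ (⋃ n, MonSet q n) := by
  obtain ⟨y, rfl⟩ := RingQuot.mkAlgHom_surjective ℂ (twistRel q) f
  induction y using FreeAlgebra.induction with
  | grade0 r =>
      rw [AlgHom.commutes, Algebra.algebraMap_eq_smul_one]
      refine Submodule.smul_mem _ r ?_
      have : (1 : TwistedPlane q)
          = (List.ofFn fun k => X q ((Fin.elim0 : Fin 0 → Fin (N + 1)) k)).prod := by
        simp
      rw [this]; exact mon_mem_spAll _
  | grade1 a =>
      have : RingQuot.mkAlgHom ℂ (twistRel q) (FreeAlgebra.ι ℂ a)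
          = (List.ofFn fun k => X q ((fun _ => a : Fin 1 → Fin (N + 1)) k)).prod := by
        simp [X]
      rw [this]; exact mon_mem_spAll _
  | mul u v hu hv =>
      rw [map_mul]
      exact mul_spAll hu hv
  | add u v hu hv => rw [map_add]; exact Submodule.add_mem _ hu hv

lemma Heven_span (H : TwistedPlane q →ₗ[ℂ] ℂ)
    (Heven : ∀ (m : ℕ) (i : Fin (2 * m) → Fin (N + 1)),
      ((∑ j, D j * D (Fin.rev j)) ^ m) ((List.ofFn fun k => X q (i k)).prod)
        = ((2 ^ m * (m.factorial : ℂ) * ∏ k ∈ Finset.range m, ((N : ℂ) + 1 + 2 * k))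
            * H ((List.ofFn fun k => X q (i k)).prod)) • 1) :
    ∀ (t : ℕ) {x : TwistedPlane q}, x ∈ MS q (2 * t) →
      (Lap q D ^ t) x
        = ((2 ^ t * (t.factorial : ℂ) * ∏ k ∈ Finset.range t, ((N : ℂ) + 1 + 2 * k))
            * H x) • 1 := by
  intro t x hx
  induction hx using Submodule.span_induction with
  | mem y hy =>
      obtain ⟨i, rfl⟩ := hy
      exact Heven t i
  | zero => simp
  | add y z _ _ hy hz => rw [map_add, hy, hz, map_add, mul_add, add_smul]
  | smul c y _ hy =>
      rw [map_smul, hy, map_smul, smul_smul, smul_eq_mul]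
      match_scalars
      ring

end Total

/-- the functional `h_ℝ` on `ℝ_q^{N+1}`, vanishing on odd-degree
monomials and given on a degree-`2n` monomial by `λ_n Δ^n(x^{i_1}⋯x^{i_{2n}})`
with `λ_n = 1/(2^n n! (N+1)(N+3)⋯(N+2n−1))` (here `Δ^n` of a degree-`2n`
monomial is a scalar), vanishes on the ideal `(c−1)·ℝ_q^{N+1}`, hence descends
to the twisted sphere `𝕊_q^N = ℝ_q^{N+1}/(c−1)`. -/
theorem haar_well_defined {N : ℕ} (q : Fin (N + 1) → Fin (N + 1) → ℂ)
    (h1 : ∀ a, q a a = 1)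
    (h2 : ∀ a b, q a b * q b a = 1)
    (h3 : ∀ a b, q a b * q a (Fin.rev b) = 1)
    (h4 : ∀ a b, q a b = q (Fin.rev a) (Fin.rev b))
    (D : Fin (N + 1) → Module.End ℂ (TwistedPlane q))
    (hD1 : ∀ s, D s 1 = 0)
    (hD2 : ∀ s a f, D s (X q a * f) =
      (if a = s then f else 0) + q a s • (X q a * D s f))
    (H : TwistedPlane q →ₗ[ℂ] ℂ)
    (Hodd : ∀ (m : ℕ) (i : Fin (2 * m + 1) → Fin (N + 1)),
      H ((List.ofFn fun k => X q (i k)).prod) = 0)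
    (Heven : ∀ (m : ℕ) (i : Fin (2 * m) → Fin (N + 1)),
      ((∑ j, D j * D (Fin.rev j)) ^ m) ((List.ofFn fun k => X q (i k)).prod)
        = ((2 ^ m * (m.factorial : ℂ) * ∏ k ∈ Finset.range m, ((N : ℂ) + 1 + 2 * k))
            * H ((List.ofFn fun k => X q (i k)).prod)) • 1) :
    ∀ f : TwistedPlane q, H ((cElem q - 1) * f) = 0 := by
  intro f
  by_cases h10 : (1 : TwistedPlane q) = 0
  · have hz : (cElem q - 1) * f = 0 := by
      calc (cElem q - 1) * f = ((cElem q - 1) * f) * 1 := (mul_one _).symm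
        _ = 0 := by rw [h10, mul_zero]
    rw [hz, map_zero]
  · set C : ℕ → ℂ := fun t =>
      2 ^ t * (t.factorial : ℂ) * ∏ k ∈ Finset.range t, ((N : ℂ) + 1 + 2 * k)
      with hCdef
    have hCne : ∀ t, C t ≠ 0 := by
      intro t
      refine mul_ne_zero (mul_ne_zero (pow_ne_zero _ two_ne_zero) ?_) ?_
      · exact Nat.cast_ne_zero.mpr t.factorial_ne_zero
      · refine Finset.prod_ne_zero_iff.mpr fun k _ => ?_
        have e : ((N : ℂ) + 1 + 2 * k) = ((N + 1 + 2 * k : ℕ) : ℂ) := by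
          push_cast; ring
        rw [e]
        exact Nat.cast_ne_zero.mpr (by omega)
    have main : ∀ (n : ℕ) (i : Fin n → Fin (N + 1)),
        H (cElem q * (List.ofFn fun k => X q (i k)).prod)
          = H ((List.ofFn fun k => X q (i k)).prod) := by
      intro n i
      rcases Nat.even_or_odd n with he | ho
      · obtain ⟨t, rfl⟩ := he
        set g := (List.ofFn fun k => X q (i k)).prod with hgdef
        have hg : g ∈ MS q (2 * t) := by
          have e : 2 * t = t + t := two_mul t
          rw [e]; exact mon_mem q i
        have hcg : cElem q * g ∈ MS q (2 * (t + 1)) := by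
          have e : 2 * (t + 1) = (t + t) + 2 := by ring
          rw [e, cElem_mul]
          refine Submodule.sum_mem _ fun a _ => ?_
          rw [hgdef, mon_two_cons]
          exact mon_mem q _
        have e1 := Heven_span H Heven t hg
        have e2 := Heven_span H Heven (t + 1) hcg
        have e3 := key2 h1 h2 h3 h4 hD1 hD2 t hg
        rw [e2, e1] at e3
        have hC : C (t + 1) = (2 * ((t : ℂ) + 1) * ((N : ℂ) + 2 * t + 1)) * C t := by
          simp only [hCdef]
          rw [pow_succ, Nat.factorial_succ, Finset.prod_range_succ]
          push_cast
          ring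
        have e4 : (C (t + 1) * H (cElem q * g)) • (1 : TwistedPlane q)
            = (C (t + 1) * H g) • 1 := by
          rw [e3, smul_smul, hC]
          match_scalars
          ring
        by_contra hne
        apply h10
        have hd : C (t + 1) * (H (cElem q * g) - H g) ≠ 0 :=
          mul_ne_zero (hCne _) (sub_ne_zero.mpr hne)
        have e6 : (C (t + 1) * (H (cElem q * g) - H g)) • (1 : TwistedPlane q) = 0 := by
          have expand : (C (t + 1) * (H (cElem q * g) - H g)) • (1 : TwistedPlane q)
              = (C (t + 1) * H (cElem q * g)) • 1 - (C (t + 1) * H g) • 1 := by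
            module
          rw [expand, e4, sub_self]
        calc (1 : TwistedPlane q)
            = ((C (t + 1) * (H (cElem q * g) - H g))⁻¹
                * (C (t + 1) * (H (cElem q * g) - H g))) • 1 := by
              rw [inv_mul_cancel₀ hd, one_smul]
          _ = (C (t + 1) * (H (cElem q * g) - H g))⁻¹
                • ((C (t + 1) * (H (cElem q * g) - H g)) • (1 : TwistedPlane q)) := by
              rw [mul_smul]
          _ = 0 := by rw [e6, smul_zero]
      · obtain ⟨t, rfl⟩ := ho
        rw [cElem_mul, map_sum]
        have hz : ∀ a : Fin (N + 1),
            H (X q a * (X q (Fin.rev a) * (List.ofFn fun k => X q (i k)).prod)) = 0 := by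
          intro a
          rw [mon_two_cons]
          exact Hodd (t + 1) _
        rw [Finset.sum_eq_zero fun a _ => hz a, Hodd t i]
    have hf := total f
    induction hf using Submodule.span_induction with
    | mem y hy =>
        rw [Set.mem_iUnion] at hy
        obtain ⟨n, i, rfl⟩ := hy
        rw [sub_mul, one_mul, map_sub, main n i, sub_self]
    | zero => simp
    | add y z _ _ hy hz => rw [mul_add, map_add, hy, hz, add_zero]
    | smul c y _ hy => rw [mul_smul_comm, map_smul, hy, smul_zero]
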